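/- For every pair (j,r) ∈ Π, the area A(j,r) is contained in the closed ball B(j, 7·5^r). -/
import Mathlib

/-- Lemma `area-contained-in-big-ball`: for every pair
`(j,r) ∈ Π`, the area `A(j,r)` is contained in the closed ball
`B(j, 7·5^r)`, where `A(j,r)` consists of the points `p` whose assigned
pair reaches `(j,r)` by iterating the parent map. -/
theorem stmt_4 {V : Type*} [MetricSpace V] (P : Finset (V × ℤ))
    (parent : V × ℤ → V × ℤ)
    (hparent : ∀ u ∈ P, parent u ∈ P ∧
      (parent u = u ∨
        ((parent u).2 = u.2 + 1 ∧ dist u.1 (parent u).1 ≤ 5 ^ (u.2 + 2))))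
    (asg : V → V × ℤ)
    (hasg : ∀ p : V, asg p ∈ P ∧ dist p (asg p).1 ≤ 7 * 5 ^ (asg p).2)
    (u : V × ℤ) (hu : u ∈ P) :
    {p : V | ∃ k : ℕ, parent^[k] (asg p) = u} ⊆
      Metric.closedBall u.1 (7 * 5 ^ u.2) := by
  intro p hp
  obtain ⟨k, hk⟩ := hp
  have key : ∀ k : ℕ, parent^[k] (asg p) ∈ P ∧
      dist p (parent^[k] (asg p)).1 ≤ 7 * 5 ^ (parent^[k] (asg p)).2 := by
    intro k
    induction k with
    | zero => simpa using hasg p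
    | succ n ih =>
      obtain ⟨hmem, hdist⟩ := ih
      rw [Function.iterate_succ_apply']
      set v := parent^[n] (asg p) with hv
      obtain ⟨hmem', hcase⟩ := hparent v hmem
      refine ⟨hmem', ?_⟩
      rcases hcase with h | ⟨h1, h2⟩
      · rw [h]; exact hdist
      · have : dist p (parent v).1 ≤ dist p v.1 + dist v.1 (parent v).1 :=
          dist_triangle _ _ _
        rw [h1]
        have h5 : (5:ℝ) ^ (v.2 + 2) = 25 * 5 ^ v.2 := by
          rw [zpow_add₀ (by norm_num : (5:ℝ) ≠ 0)]; norm_num; ring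
        have h5' : (5:ℝ) ^ (v.2 + 1) = 5 * 5 ^ v.2 := by
          rw [zpow_add₀ (by norm_num : (5:ℝ) ≠ 0)]; norm_num; ring
        have hpos : (0:ℝ) < 5 ^ v.2 := zpow_pos (by norm_num) _
        calc dist p (parent v).1 ≤ dist p v.1 + dist v.1 (parent v).1 := this
          _ ≤ 7 * 5 ^ v.2 + 25 * 5 ^ v.2 := by rw [← h5]; linarith
          _ ≤ 7 * (5 * 5 ^ v.2) := by linarith
          _ = 7 * 5 ^ (v.2 + 1) := by rw [h5']
  have := (key k).2
  rw [hk] at this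
  exact Metric.mem_closedBall.mpr this
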